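/- Let f : [0,1] → ℝ be continuous, ε > 0, and K ∈ ℝ. Then there exists a Lipschitz function f̂ : [0,1] → ℝ with |f(x) − f̂(x)| < ε for all x ∈ [0,1], such that f̂ is differentiable with derivative identically equal to K on some open dense subset of [0,1]. -/

import Mathlib

open MeasureTheory intervalIntegral Set

/-- Counter-intuitive approximation of continuous functions: every continuous
`f : [0,1] → ℝ` can be uniformly `ε`-approximated by a Lipschitz function `f̂` which,
on an open subset of `[0,1]` that is dense in `[0,1]`, is differentiable with
derivative identically equal to a prescribed constant `K`. -/
theorem lipschitz_approx_prescribed_deriv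
    (f : ℝ → ℝ) (hf : ContinuousOn f (Set.Icc 0 1)) (ε : ℝ) (hε : 0 < ε) (K : ℝ) :
    ∃ (fh : ℝ → ℝ) (L : NNReal), LipschitzOnWith L fh (Set.Icc 0 1) ∧
      (∀ x ∈ Set.Icc (0 : ℝ) 1, |f x - fh x| < ε) ∧
      ∃ U : Set ℝ, IsOpen U ∧ U ⊆ Set.Icc 0 1 ∧ Set.Icc (0 : ℝ) 1 ⊆ closure U ∧
        ∀ x ∈ U, HasDerivAt fh K x := by
  -- polynomial approximation
  obtain ⟨p, hp⟩ := exists_polynomial_near_of_continuousOn 0 1 f hf (ε/2) (by linarith)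
  set p' : ℝ → ℝ := fun t => Polynomial.eval t (Polynomial.derivative p) with hp'def
  have hp'cont : Continuous p' := Polynomial.continuous _
  obtain ⟨M, hM⟩ : ∃ M, ∀ t ∈ Set.Icc (0:ℝ) 1, |p' t| ≤ M :=
    (isCompact_Icc.exists_bound_of_continuousOn hp'cont.continuousOn).imp
      (fun M hM t ht => hM t ht)
  have hM0 : 0 ≤ M := le_trans (abs_nonneg _) (hM 0 (by norm_num))
  set C : ℝ := |K| + M with hCdef
  have hC0 : 0 ≤ C := by positivity
  set δ : ℝ := ε / (16 * (C + 1)) with hδdef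
  have hδ0 : 0 < δ := by positivity
  -- the open dense set of small measure
  obtain ⟨q, hq⟩ := exists_surjective_nat ℚ
  set r : ℕ → ℝ := fun n => δ * 2⁻¹ ^ n with hrdef
  have hr0 : ∀ n, 0 < r n := fun n => by positivity
  set U : Set ℝ := ⋃ n, (Set.Ioo ((q n : ℝ) - r n) ((q n : ℝ) + r n) ∩ Set.Ioo 0 1) with hUdef
  have hUopen : IsOpen U := isOpen_iUnion fun n => (isOpen_Ioo.inter isOpen_Ioo)
  have hUsub' : U ⊆ Set.Ioo 0 1 := Set.iUnion_subset fun n => Set.inter_subset_right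
  have hUsub : U ⊆ Set.Icc 0 1 := hUsub'.trans Set.Ioo_subset_Icc_self
  have hUm : MeasurableSet U := hUopen.measurableSet
  have hQmem : ∀ s : ℚ, (s : ℝ) ∈ Set.Ioo (0:ℝ) 1 → (s : ℝ) ∈ U := by
    intro s hs
    obtain ⟨n, rfl⟩ := hq s
    exact Set.mem_iUnion.2 ⟨n, ⟨⟨by linarith [hr0 n, hs.1], by linarith [hr0 n]⟩, hs⟩⟩
  have hUdense : Set.Icc (0:ℝ) 1 ⊆ closure U := by
    intro x hx
    rw [mem_closure_iff]
    intro V hV hxV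
    have hx' : x ∈ closure (Set.Ioo (0:ℝ) 1) := by
      rw [closure_Ioo (by norm_num : (0:ℝ) ≠ 1)]; exact hx
    obtain ⟨y, hyV, hy⟩ := mem_closure_iff.1 hx' V hV hxV
    have : IsOpen (V ∩ Set.Ioo (0:ℝ) 1) := hV.inter isOpen_Ioo
    obtain ⟨η, hη0, hηsub⟩ := Metric.isOpen_iff.1 this y ⟨hyV, hy⟩
    obtain ⟨s, hs1, hs2⟩ := exists_rat_btwn (show y - η < y + η by linarith)
    have hsball : (s:ℝ) ∈ Metric.ball y η := by
      rw [Real.ball_eq_Ioo]; exact ⟨hs1, hs2⟩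
    have hsV := hηsub hsball
    exact ⟨s, hsV.1, hQmem s hsV.2⟩
  -- measure bound
  have hUmeas : volume U ≤ ENNReal.ofReal (4 * δ) := by
    have h2 : ∀ n, volume (Set.Ioo ((q n : ℝ) - r n) ((q n : ℝ) + r n) ∩ Set.Ioo 0 1)
        ≤ ENNReal.ofReal (2 * δ) * 2⁻¹ ^ n := by
      intro n
      calc volume (Set.Ioo ((q n : ℝ) - r n) ((q n : ℝ) + r n) ∩ Set.Ioo 0 1)
          ≤ volume (Set.Ioo ((q n : ℝ) - r n) ((q n : ℝ) + r n)) :=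
            measure_mono Set.inter_subset_left
        _ = ENNReal.ofReal (2 * r n) := by
            rw [Real.volume_Ioo, show (q n : ℝ) + r n - ((q n : ℝ) - r n) = 2 * r n by ring]
        _ = ENNReal.ofReal (2 * δ) * 2⁻¹ ^ n := by
            rw [hrdef, show 2 * (δ * 2⁻¹ ^ n) = (2 * δ) * (2⁻¹ : ℝ) ^ n by ring,
              ENNReal.ofReal_mul (by positivity), ENNReal.ofReal_pow (by norm_num),
              ENNReal.ofReal_inv_of_pos (by norm_num : (0:ℝ) < 2)]
            norm_num
    calc volume U ≤ ∑' n, volume (Set.Ioo ((q n : ℝ) - r n) ((q n : ℝ) + r n) ∩ Set.Ioo 0 1) :=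
          measure_iUnion_le _
      _ ≤ ∑' n, ENNReal.ofReal (2 * δ) * 2⁻¹ ^ n := ENNReal.tsum_le_tsum h2
      _ = ENNReal.ofReal (2 * δ) * ∑' n : ℕ, 2⁻¹ ^ n := ENNReal.tsum_mul_left
      _ = ENNReal.ofReal (2 * δ) * 2 := by
          rw [ENNReal.tsum_geometric, ENNReal.one_sub_inv_two, inv_inv]
      _ = ENNReal.ofReal (4 * δ) := by
          rw [show (2:ENNReal) = ENNReal.ofReal 2 by norm_num,
            ← ENNReal.ofReal_mul (by positivity), show 2 * δ * 2 = 4 * δ by ring]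
  -- the integrand
  set h : ℝ → ℝ := Set.indicator U (fun t => K - p' t) with hhdef
  have hbound : ∀ t, ‖h t‖ ≤ C := by
    intro t
    rw [hhdef]
    by_cases ht : t ∈ U
    · rw [Set.indicator_of_mem ht]
      have := hM t (hUsub ht)
      calc ‖K - p' t‖ ≤ |K| + |p' t| := norm_sub_le _ _
        _ ≤ C := by rw [hCdef]; linarith
    · rw [Set.indicator_of_notMem ht]; simpa using hC0
  have hhmeas : Measurable h := ((measurable_const.sub hp'cont.measurable)).indicator hUm
  have hint : ∀ a b : ℝ, IntervalIntegrable h volume a b := by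
    intro a b
    rw [intervalIntegrable_iff]
    have hfin : volume (Set.uIoc a b) < ⊤ := by rw [Set.uIoc]; exact measure_Ioc_lt_top
    apply Integrable.mono' (integrableOn_const hfin.ne (by simp) : IntegrableOn (fun _ => C) _ _) hhmeas.aestronglyMeasurable
    exact Filter.Eventually.of_forall hbound
  set F : ℝ → ℝ := fun x => ∫ t in (0:ℝ)..x, h t with hFdef
  set fh : ℝ → ℝ := fun x => Polynomial.eval x p + F x with hfhdef
  have hFlip : ∀ x y : ℝ, |F x - F y| ≤ C * |x - y| := by
    intro x y
    have : F x - F y = ∫ t in y..x, h t := by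
      rw [hFdef]
      exact (integral_interval_sub_left (hint 0 x) (hint 0 y))
    rw [this]
    have := intervalIntegral.norm_integral_le_of_norm_le_const
      (fun t _ => hbound t) (a := y) (b := x)
    simpa [abs_sub_comm x y] using this
  refine ⟨fh, Real.toNNReal (M + C), ?_, ?_, U, hUopen, hUsub, hUdense, ?_⟩
  · -- Lipschitz
    rw [lipschitzOnWith_iff_dist_le_mul]
    intro x hx y hy
    have hpl : ‖Polynomial.eval x p - Polynomial.eval y p‖ ≤ M * ‖x - y‖ := by
      apply (convex_Icc (0:ℝ) 1).norm_image_sub_le_of_norm_hasDerivWithin_le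
        (f := fun t => Polynomial.eval t p) (f' := p')
        (fun t ht => (Polynomial.hasDerivAt p t).hasDerivWithinAt)
        (fun t ht => by simpa using hM t ht) hy hx
    have key : dist (fh x) (fh y) ≤ (M + C) * dist x y := by
      rw [Real.dist_eq, Real.dist_eq]
      calc |fh x - fh y| = |(Polynomial.eval x p - Polynomial.eval y p) + (F x - F y)| := by
            rw [hfhdef]; ring_nf
        _ ≤ |Polynomial.eval x p - Polynomial.eval y p| + |F x - F y| := abs_add_le _ _
        _ ≤ M * |x - y| + C * |x - y| := add_le_add (by simpa using hpl) (hFlip x y)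
        _ = (M + C) * |x - y| := by ring
    calc dist (fh x) (fh y) ≤ (M + C) * dist x y := key
      _ = (Real.toNNReal (M + C) : ℝ) * dist x y := by
          rw [Real.coe_toNNReal _ (by linarith)]
  · -- approximation
    intro x hx
    have hx0 : (0:ℝ) ≤ x := hx.1
    have hF : |F x| ≤ C * (4 * δ) := by
      have hIoc : F x = ∫ t in Set.Ioc 0 x, h t := intervalIntegral.integral_of_le hx0
      have h1 : ‖∫ t in Set.Ioc 0 x, h t‖ ≤ ∫ t in Set.Ioc 0 x, ‖h t‖ :=
        norm_integral_le_integral_norm _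
      have h2 : ∫ t in Set.Ioc 0 x, ‖h t‖ ≤ ∫ t in Set.Ioc 0 x, Set.indicator U (fun _ => C) t := by
        apply MeasureTheory.integral_mono
        · exact (hint 0 x).1.norm
        · rw [integrable_indicator_iff hUm]
          refine integrableOn_const ?_ (by simp)
          rw [Measure.restrict_apply hUm]
          exact (lt_of_le_of_lt (measure_mono Set.inter_subset_right) measure_Ioc_lt_top).ne
        · intro t
          by_cases ht : t ∈ U
          · have h5 := hM t (hUsub ht)
            simp only [hhdef, Set.indicator_of_mem ht]
            exact le_trans (norm_sub_le _ _) (by simp only [Real.norm_eq_abs, hCdef]; linarith)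
          · simp only [hhdef, Set.indicator_of_notMem ht]; simp
      have h3 : ∫ t in Set.Ioc 0 x, Set.indicator U (fun _ => C) t
          = (volume (U ∩ Set.Ioc 0 x)).toReal * C := by
        rw [MeasureTheory.integral_indicator_const C hUm, measureReal_def, Measure.restrict_apply hUm,
          smul_eq_mul]
      have h4 : (volume (U ∩ Set.Ioc 0 x)).toReal ≤ 4 * δ := by
        apply ENNReal.toReal_le_of_le_ofReal (by positivity)
        exact le_trans (measure_mono Set.inter_subset_left) hUmeas
      calc |F x| = ‖∫ t in Set.Ioc 0 x, h t‖ := by rw [hIoc]; rfl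
        _ ≤ (volume (U ∩ Set.Ioc 0 x)).toReal * C := le_trans h1 (le_trans h2 (le_of_eq h3))
        _ ≤ (4 * δ) * C := by
            apply mul_le_mul_of_nonneg_right h4 hC0
        _ = C * (4 * δ) := by ring
    have hδC : C * (4 * δ) < ε / 2 := by
      have hC1 : (0:ℝ) < C + 1 := by linarith
      have hδval : δ * (16 * (C + 1)) = ε := by
        rw [hδdef]; field_simp
      nlinarith [mul_pos hδ0 hC1, mul_nonneg hC0 hδ0.le]
    calc |f x - fh x| = |(f x - Polynomial.eval x p) - F x| := by rw [hfhdef]; ring_nf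
      _ ≤ |f x - Polynomial.eval x p| + |F x| := abs_sub _ _
      _ < ε/2 + ε/2 := by
          have := hp x hx
          rw [abs_sub_comm] at this
          exact add_lt_add_of_lt_of_le this (le_of_lt (lt_of_le_of_lt hF hδC))
      _ = ε := by ring
  · -- derivative
    intro x hx
    obtain ⟨ρ, hρ0, hρsub⟩ := Metric.isOpen_iff.1 hUopen x hx
    have hball : ∀ y ∈ Metric.ball x ρ, fh y = fh x + K * (y - x) := by
      intro y hy
      have huIcc : Set.uIcc x y ⊆ U := by
        refine le_trans ?_ hρsub
        exact ((convex_ball x ρ).ordConnected).uIcc_subset (Metric.mem_ball_self hρ0) hy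
      have e1 : (∫ t in x..y, h t) = ∫ t in x..y, (K - p' t) := by
        apply intervalIntegral.integral_congr
        intro t ht
        exact Set.indicator_of_mem (huIcc ht) _
      have e2 : (∫ t in x..y, (K - p' t)) = K * (y - x) - (Polynomial.eval y p - Polynomial.eval x p) := by
        have hK : (∫ t in x..y, (K:ℝ)) = K * (y - x) := by simp [mul_comm]
        have hpi : (∫ t in x..y, p' t) = Polynomial.eval y p - Polynomial.eval x p := by
          apply intervalIntegral.integral_eq_sub_of_hasDerivAt
          · intro t _; exact Polynomial.hasDerivAt p t
          · exact hp'cont.intervalIntegrable x y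
        rw [intervalIntegral.integral_sub intervalIntegrable_const
          (hp'cont.intervalIntegrable x y), hK, hpi]
      have e3 : F y - F x = ∫ t in x..y, h t :=
        integral_interval_sub_left (hint 0 y) (hint 0 x)
      have : fh y - fh x = K * (y - x) := by
        rw [hfhdef]
        simp only
        have : Polynomial.eval y p + F y - (Polynomial.eval x p + F x)
            = (Polynomial.eval y p - Polynomial.eval x p) + (F y - F x) := by ring
        rw [this, e3, e1, e2]; ring
      linarith [this]
    have hg : HasDerivAt (fun y => fh x + K * (y - x)) K x := by
      simpa using (((hasDerivAt_id x).sub_const x).const_mul K).const_add (fh x)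
    apply hg.congr_of_eventuallyEq
    filter_upwards [Metric.ball_mem_nhds x hρ0] with y hy
    exact hball y hy
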